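/- For every real symmetric 3 × 3 matrix A with tr A = 0 and every s ∈ ℝ, one has Φ₃(γ'(s), γ'(s), A) = −(1/3) A₃₃; in particular, this quantity is independent of s. (This is the real-entries instance of the computation showing that the quadratic tensor field K_A(Y,Z) = Φ(Y,Z,A) on the Cayley projective plane takes the constant value −r₃/3 along the model geodesic.) -/
import Mathlib


noncomputable section

open Real

/-- The symmetric trilinear form `Φ₃` on 3 × 3 real matrices obtained by polarizing the
determinant: `Φ₃(A₁,A₂,A₃) = (1/6) ∂³/∂t₁∂t₂∂t₃ det(t₁A₁ + t₂A₂ + t₃A₃)`, which equals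
`(1/6)` times the sum, over the six permutations `σ` of `{1,2,3}`, of the mixed
determinant of `(A_{σ(1)}, A_{σ(2)}, A_{σ(3)})` (the determinant of the matrix whose
`j`-th column is the `j`-th column of `A_{σ(j)}`). -/
def Phi3 (A₁ A₂ A₃ : Matrix (Fin 3) (Fin 3) ℝ) : ℝ :=
  (1 / 6) * ∑ σ : Equiv.Perm (Fin 3),
    Matrix.det (Matrix.of fun i j : Fin 3 => (![A₁, A₂, A₃] (σ j)) i j)

/-- The velocity `γ'(s)` of the model geodesic `γ(s)` (with entries
`γ₁₁ = cos²s, γ₁₂ = γ₂₁ = cos s sin s, γ₂₂ = sin²s`, other entries 0). -/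
def gammaDot (s : ℝ) : Matrix (Fin 3) (Fin 3) ℝ :=
  Matrix.of
    ![![-2 * cos s * sin s, cos s ^ 2 - sin s ^ 2, 0],
      ![cos s ^ 2 - sin s ^ 2, 2 * cos s * sin s, 0],
      ![0, 0, 0]]

/-- for every real symmetric 3 × 3 matrix `A` of trace zero and every
`s ∈ ℝ`, one has `Φ₃(γ'(s), γ'(s), A) = −(1/3) A₃₃`; in particular this is independent
of `s`. -/
theorem stmt9 (A : Matrix (Fin 3) (Fin 3) ℝ) (hsymm : A.IsSymm) (htr : A.trace = 0)
    (s : ℝ) :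
    Phi3 (gammaDot s) (gammaDot s) A = -(1 / 3) * A 2 2 := by
  have h02 : A 0 2 = A 2 0 := Matrix.IsSymm.apply hsymm _ _
  have h12 : A 1 2 = A 2 1 := Matrix.IsSymm.apply hsymm _ _
  have h01 : A 0 1 = A 1 0 := Matrix.IsSymm.apply hsymm _ _
  have htr' : A 0 0 + A 1 1 + A 2 2 = 0 := by
    simpa [Matrix.trace, Matrix.diag, Fin.sum_univ_three] using htr
  have huniv : (Finset.univ : Finset (Equiv.Perm (Fin 3))) =
      {1, Equiv.swap 0 1, Equiv.swap 0 2, Equiv.swap 1 2,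
       Equiv.swap 0 1 * Equiv.swap 1 2, Equiv.swap 1 2 * Equiv.swap 0 1} := by decide
  rw [Phi3, huniv]
  rw [Finset.sum_insert (by decide), Finset.sum_insert (by decide),
    Finset.sum_insert (by decide), Finset.sum_insert (by decide),
    Finset.sum_insert (by decide), Finset.sum_singleton]
  have e1 : Equiv.swap (0:Fin 3) 1 0 = 1 := by decide
  have e2 : Equiv.swap (0:Fin 3) 1 1 = 0 := by decide
  have e3 : Equiv.swap (0:Fin 3) 1 2 = 2 := by decide
  have e4 : Equiv.swap (0:Fin 3) 2 0 = 2 := by decide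
  have e5 : Equiv.swap (0:Fin 3) 2 1 = 1 := by decide
  have e6 : Equiv.swap (0:Fin 3) 2 2 = 0 := by decide
  have e7 : Equiv.swap (1:Fin 3) 2 0 = 0 := by decide
  have e8 : Equiv.swap (1:Fin 3) 2 1 = 2 := by decide
  have e9 : Equiv.swap (1:Fin 3) 2 2 = 1 := by decide
  simp only [Matrix.det_fin_three, Matrix.of_apply, Equiv.Perm.coe_one, id_eq,
    Equiv.Perm.coe_mul, Function.comp_apply, e1, e2, e3, e4, e5, e6, e7, e8, e9,
    Matrix.cons_val_zero, Matrix.cons_val_one, Matrix.head_cons, Matrix.cons_val_two,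
    Matrix.tail_cons, gammaDot]
  have hpy : sin s ^ 2 = 1 - cos s ^ 2 := by
    have := sin_sq_add_cos_sq s; linarith
  have hA22 : A 2 2 = -(A 0 0 + A 1 1) := by linarith
  rw [hpy, hA22]
  ring_nf
  rw [hpy]
  ring
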